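/- For the m×k grid graph G (Cartesian product of paths P_m and P_k), the minimum membership dimension of a good system of categories equals diam(G) = (m−1) + (k−1). -/

import Mathlib

open Finset SimpleGraph

variable {V : Type*}

def catDist [DecidableEq V] (S : Finset (Finset V)) (s t : V) : ℕ :=
  (S.filter fun C => t ∈ C ∧ s ∉ C).card

def IsGoodSystem [DecidableEq V] (G : SimpleGraph V) (S : Finset (Finset V)) : Prop :=
  (∀ C ∈ S, (G.induce (C : Set V)).Connected) ∧
    ∀ s t : V, s ≠ t → ∃ u, G.Adj s u ∧ catDist S u t < catDist S s t

def memdim [DecidableEq V] [Fintype V] (S : Finset (Finset V)) : ℕ :=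
  univ.sup fun v : V => (S.filter fun C => v ∈ C).card

lemma descent [DecidableEq V] {G : SimpleGraph V} {S : Finset (Finset V)}
    (hS : IsGoodSystem G S) (f : V → ℤ) (hf : ∀ a b, G.Adj a b → (f a - f b).natAbs ≤ 1)
    (t : V) : ∀ s : V, (f s - f t).natAbs ≤ catDist S s t := by
  suffices h : ∀ n : ℕ, ∀ s : V, catDist S s t ≤ n → (f s - f t).natAbs ≤ catDist S s t from
    fun s => h _ s le_rfl
  intro n
  induction n with
  | zero =>
    intro s hs
    by_cases hst : s = t
    · subst hst; simp
    · obtain ⟨u, _, hlt⟩ := hS.2 s t hst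
      omega
  | succ n ih =>
    intro s hs
    by_cases hst : s = t
    · subst hst; simp
    · obtain ⟨u, hadj, hlt⟩ := hS.2 s t hst
      have h1 := ih u (by omega)
      have h2 := hf s u hadj
      have h3 : (f s - f t).natAbs ≤ (f s - f u).natAbs + (f u - f t).natAbs := by
        have := Int.natAbs_add_le (f s - f u) (f u - f t)
        simpa using this
      omega

lemma catDist_le_memdim [DecidableEq V] [Fintype V] (S : Finset (Finset V)) (s t : V) :
    catDist S s t ≤ memdim S := by
  refine le_trans (Finset.card_le_card ?_) (Finset.le_sup (f := fun v : V => (S.filter fun C => v ∈ C).card) (mem_univ t))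
  intro C hC
  simp only [Finset.mem_filter] at *
  exact ⟨hC.1, hC.2.1⟩

lemma lower_bound (m k : ℕ) (hm : 1 ≤ m) (hk : 1 ≤ k)
    {S : Finset (Finset (Fin m × Fin k))} (hS : IsGoodSystem (pathGraph m □ pathGraph k) S) :
    (m - 1) + (k - 1) ≤ memdim S := by
  let f : Fin m × Fin k → ℤ := fun v => (v.1.val : ℤ) + v.2.val
  have hf : ∀ a b, (pathGraph m □ pathGraph k).Adj a b → (f a - f b).natAbs ≤ 1 := by
    rintro ⟨a1, a2⟩ ⟨b1, b2⟩ h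
    rcases h with ⟨h1, h2⟩ | ⟨h1, h2⟩ <;>
    · dsimp only at h1 h2
      rw [pathGraph_adj] at h1
      subst h2
      simp [f]
      omega
  have := descent hS f hf (⟨m - 1, by omega⟩, ⟨k - 1, by omega⟩) (⟨0, by omega⟩, ⟨0, by omega⟩)
  have h2 := catDist_le_memdim S ((⟨0, by omega⟩ : Fin m), (⟨0, by omega⟩ : Fin k))
    (⟨m - 1, by omega⟩, ⟨k - 1, by omega⟩)
  simp only [f, Fin.val_mk] at this
  omega


section Construction

variable (m k : ℕ)

def Lrow (i : ℕ) : Finset (Fin m × Fin k) := univ.filter fun v => v.1.val < i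
def Urow (i : ℕ) : Finset (Fin m × Fin k) := univ.filter fun v => i ≤ v.1.val
def Lcol (j : ℕ) : Finset (Fin m × Fin k) := univ.filter fun v => v.2.val < j
def Ucol (j : ℕ) : Finset (Fin m × Fin k) := univ.filter fun v => j ≤ v.2.val

def gridS : Finset (Finset (Fin m × Fin k)) :=
  ((Ico 1 m).image (Lrow m k)) ∪ ((Ico 1 m).image (Urow m k)) ∪
    ((Ico 1 k).image (Lcol m k)) ∪ ((Ico 1 k).image (Ucol m k))

variable {m k}

@[simp] lemma mem_Lrow {v : Fin m × Fin k} {i : ℕ} : v ∈ Lrow m k i ↔ v.1.val < i := by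
  simp [Lrow]
@[simp] lemma mem_Urow {v : Fin m × Fin k} {i : ℕ} : v ∈ Urow m k i ↔ i ≤ v.1.val := by
  simp [Urow]
@[simp] lemma mem_Lcol {v : Fin m × Fin k} {j : ℕ} : v ∈ Lcol m k j ↔ v.2.val < j := by
  simp [Lcol]
@[simp] lemma mem_Ucol {v : Fin m × Fin k} {j : ℕ} : v ∈ Ucol m k j ↔ j ≤ v.2.val := by
  simp [Ucol]

variable (hm : 1 ≤ m) (hk : 1 ≤ k)
include hm hk

lemma card_filter_gridS (P : Finset (Fin m × Fin k) → Prop) [DecidablePred P] :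
    ((gridS m k).filter P).card =
      ((Ico 1 m).filter fun i => P (Lrow m k i)).card +
        ((Ico 1 m).filter fun i => P (Urow m k i)).card +
        ((Ico 1 k).filter fun j => P (Lcol m k j)).card +
        ((Ico 1 k).filter fun j => P (Ucol m k j)).card := by
  have hinjL : Set.InjOn (Lrow m k) (Ico 1 m : Finset ℕ) := by
    intro i hi i' hi' h
    simp only [coe_Ico, Set.mem_Ico] at hi hi'
    by_contra hne
    rcases Nat.lt_or_ge i i' with hc | hc
    · have hmem : ((⟨i, by omega⟩ : Fin m), (⟨0, hk⟩ : Fin k)) ∈ Lrow m k i' := by simpa using hc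
      rw [← h] at hmem; simp at hmem
    · have hc' : i' < i := by omega
      have hmem : ((⟨i', by omega⟩ : Fin m), (⟨0, hk⟩ : Fin k)) ∈ Lrow m k i := by simpa using hc'
      rw [h] at hmem; simp at hmem
  have hinjU : Set.InjOn (Urow m k) (Ico 1 m : Finset ℕ) := by
    intro i hi i' hi' h
    simp only [coe_Ico, Set.mem_Ico] at hi hi'
    by_contra hne
    rcases Nat.lt_or_ge i i' with hc | hc
    · have hmem : ((⟨i, by omega⟩ : Fin m), (⟨0, hk⟩ : Fin k)) ∈ Urow m k i := by simp
      rw [h] at hmem; simp at hmem; omega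
    · have hc' : i' < i := by omega
      have hmem : ((⟨i', by omega⟩ : Fin m), (⟨0, hk⟩ : Fin k)) ∈ Urow m k i' := by simp
      rw [← h] at hmem; simp at hmem; omega
  have hinjLc : Set.InjOn (Lcol m k) (Ico 1 k : Finset ℕ) := by
    intro i hi i' hi' h
    simp only [coe_Ico, Set.mem_Ico] at hi hi'
    by_contra hne
    rcases Nat.lt_or_ge i i' with hc | hc
    · have hmem : ((⟨0, hm⟩ : Fin m), (⟨i, by omega⟩ : Fin k)) ∈ Lcol m k i' := by simpa using hc
      rw [← h] at hmem; simp at hmem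
    · have hc' : i' < i := by omega
      have hmem : ((⟨0, hm⟩ : Fin m), (⟨i', by omega⟩ : Fin k)) ∈ Lcol m k i := by simpa using hc'
      rw [h] at hmem; simp at hmem
  have hinjUc : Set.InjOn (Ucol m k) (Ico 1 k : Finset ℕ) := by
    intro i hi i' hi' h
    simp only [coe_Ico, Set.mem_Ico] at hi hi'
    by_contra hne
    rcases Nat.lt_or_ge i i' with hc | hc
    · have hmem : ((⟨0, hm⟩ : Fin m), (⟨i, by omega⟩ : Fin k)) ∈ Ucol m k i := by simp
      rw [h] at hmem; simp at hmem; omega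
    · have hc' : i' < i := by omega
      have hmem : ((⟨0, hm⟩ : Fin m), (⟨i', by omega⟩ : Fin k)) ∈ Ucol m k i' := by simp
      rw [← h] at hmem; simp at hmem; omega
  -- disjointness helpers
  have v00 : Fin m × Fin k := (⟨0, hm⟩, ⟨0, hk⟩)
  have hd1 : Disjoint ((Ico 1 m).image (Lrow m k)) ((Ico 1 m).image (Urow m k)) := by
    rw [Finset.disjoint_left]
    rintro C hC hC'
    simp only [mem_image, mem_Ico] at hC hC'
    obtain ⟨i, hi, rfl⟩ := hC
    obtain ⟨i', hi', heq⟩ := hC'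
    have h1 : ((⟨0, hm⟩ : Fin m), (⟨0, hk⟩ : Fin k)) ∈ Lrow m k i := by simp; omega
    rw [← heq] at h1; simp at h1; omega
  have hd2 : Disjoint ((Ico 1 m).image (Lrow m k)) ((Ico 1 k).image (Lcol m k)) := by
    rw [Finset.disjoint_left]
    rintro C hC hC'
    simp only [mem_image, mem_Ico] at hC hC'
    obtain ⟨i, hi, rfl⟩ := hC
    obtain ⟨j, hj, heq⟩ := hC'
    have h1 : ((⟨0, hm⟩ : Fin m), (⟨k - 1, by omega⟩ : Fin k)) ∈ Lrow m k i := by simp; omega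
    rw [← heq] at h1; simp at h1; omega
  have hd3 : Disjoint ((Ico 1 m).image (Lrow m k)) ((Ico 1 k).image (Ucol m k)) := by
    rw [Finset.disjoint_left]
    rintro C hC hC'
    simp only [mem_image, mem_Ico] at hC hC'
    obtain ⟨i, hi, rfl⟩ := hC
    obtain ⟨j, hj, heq⟩ := hC'
    have h1 : ((⟨0, hm⟩ : Fin m), (⟨0, hk⟩ : Fin k)) ∈ Lrow m k i := by simp; omega
    rw [← heq] at h1; simp at h1; omega
  have hd4 : Disjoint ((Ico 1 m).image (Urow m k)) ((Ico 1 k).image (Lcol m k)) := by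
    rw [Finset.disjoint_left]
    rintro C hC hC'
    simp only [mem_image, mem_Ico] at hC hC'
    obtain ⟨i, hi, rfl⟩ := hC
    obtain ⟨j, hj, heq⟩ := hC'
    have h1 : ((⟨m - 1, by omega⟩ : Fin m), (⟨k - 1, by omega⟩ : Fin k)) ∈ Urow m k i := by
      simp; omega
    rw [← heq] at h1; simp at h1; omega
  have hd5 : Disjoint ((Ico 1 m).image (Urow m k)) ((Ico 1 k).image (Ucol m k)) := by
    rw [Finset.disjoint_left]
    rintro C hC hC'
    simp only [mem_image, mem_Ico] at hC hC'
    obtain ⟨i, hi, rfl⟩ := hC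
    obtain ⟨j, hj, heq⟩ := hC'
    have h1 : ((⟨m - 1, by omega⟩ : Fin m), (⟨0, hk⟩ : Fin k)) ∈ Urow m k i := by simp; omega
    rw [← heq] at h1; simp at h1; omega
  have hd6 : Disjoint ((Ico 1 k).image (Lcol m k)) ((Ico 1 k).image (Ucol m k)) := by
    rw [Finset.disjoint_left]
    rintro C hC hC'
    simp only [mem_image, mem_Ico] at hC hC'
    obtain ⟨j, hj, rfl⟩ := hC
    obtain ⟨j', hj', heq⟩ := hC'
    have h1 : ((⟨0, hm⟩ : Fin m), (⟨0, hk⟩ : Fin k)) ∈ Lcol m k j := by simp; omega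
    rw [← heq] at h1; simp at h1; omega
  rw [gridS, filter_union, filter_union, filter_union]
  rw [card_union_of_disjoint, card_union_of_disjoint, card_union_of_disjoint]
  · rw [filter_image, filter_image, filter_image, filter_image,
      card_image_of_injOn (hinjL.mono (filter_subset _ _)),
      card_image_of_injOn (hinjU.mono (filter_subset _ _)),
      card_image_of_injOn (hinjLc.mono (filter_subset _ _)),
      card_image_of_injOn (hinjUc.mono (filter_subset _ _))]
  · have key : ∀ {A B : Finset (Finset (Fin m × Fin k))}, Disjoint A B →
        Disjoint (A.filter P) (B.filter P) := fun h => disjoint_filter_filter h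
    exact key hd1
  · have key : ∀ {A B : Finset (Finset (Fin m × Fin k))}, Disjoint A B →
        Disjoint (A.filter P) (B.filter P) := fun h => disjoint_filter_filter h
    exact Finset.disjoint_union_left.mpr ⟨key hd2, key hd4⟩
  · have key : ∀ {A B : Finset (Finset (Fin m × Fin k))}, Disjoint A B →
        Disjoint (A.filter P) (B.filter P) := fun h => disjoint_filter_filter h
    exact Finset.disjoint_union_left.mpr ⟨Finset.disjoint_union_left.mpr
      ⟨key hd3, key hd5⟩, key hd6⟩

lemma catDist_gridS (s t : Fin m × Fin k) :
    catDist (gridS m k) s t =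
      (s.1.val - t.1.val) + (t.1.val - s.1.val) + (s.2.val - t.2.val) + (t.2.val - s.2.val) := by
  rw [catDist, card_filter_gridS hm hk]
  have e1 : (Ico 1 m).filter (fun i => t ∈ Lrow m k i ∧ s ∉ Lrow m k i) =
      Ico (t.1.val + 1) (s.1.val + 1) := by
    ext i
    have := s.1.isLt
    have := t.1.isLt
    simp only [mem_Ico, mem_filter, mem_Lrow]
    omega
  have e2 : (Ico 1 m).filter (fun i => t ∈ Urow m k i ∧ s ∉ Urow m k i) =
      Ico (s.1.val + 1) (t.1.val + 1) := by
    ext i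
    have := s.1.isLt
    have := t.1.isLt
    simp only [mem_Ico, mem_filter, mem_Urow]
    omega
  have e3 : (Ico 1 k).filter (fun j => t ∈ Lcol m k j ∧ s ∉ Lcol m k j) =
      Ico (t.2.val + 1) (s.2.val + 1) := by
    ext j
    have := s.2.isLt
    have := t.2.isLt
    simp only [mem_Ico, mem_filter, mem_Lcol]
    omega
  have e4 : (Ico 1 k).filter (fun j => t ∈ Ucol m k j ∧ s ∉ Ucol m k j) =
      Ico (s.2.val + 1) (t.2.val + 1) := by
    ext j
    have := s.2.isLt
    have := t.2.isLt
    simp only [mem_Ico, mem_filter, mem_Ucol]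
    omega
  rw [e1, e2, e3, e4, Nat.card_Ico, Nat.card_Ico, Nat.card_Ico, Nat.card_Ico]
  omega

lemma memdim_aux_gridS (v : Fin m × Fin k) :
    ((gridS m k).filter fun C => v ∈ C).card = (m - 1) + (k - 1) := by
  rw [card_filter_gridS hm hk]
  have e1 : (Ico 1 m).filter (fun i => v ∈ Lrow m k i) = Ico (v.1.val + 1) m := by
    ext i
    have := v.1.isLt
    simp only [mem_Ico, mem_filter, mem_Lrow]
    omega
  have e2 : (Ico 1 m).filter (fun i => v ∈ Urow m k i) = Ico 1 (v.1.val + 1) := by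
    ext i
    have := v.1.isLt
    simp only [mem_Ico, mem_filter, mem_Urow]
    omega
  have e3 : (Ico 1 k).filter (fun j => v ∈ Lcol m k j) = Ico (v.2.val + 1) k := by
    ext j
    have := v.2.isLt
    simp only [mem_Ico, mem_filter, mem_Lcol]
    omega
  have e4 : (Ico 1 k).filter (fun j => v ∈ Ucol m k j) = Ico 1 (v.2.val + 1) := by
    ext j
    have := v.2.isLt
    simp only [mem_Ico, mem_filter, mem_Ucol]
    omega
  rw [e1, e2, e3, e4, Nat.card_Ico, Nat.card_Ico, Nat.card_Ico, Nat.card_Ico]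
  have := v.1.isLt
  have := v.2.isLt
  omega

end Construction


lemma connected_row (m k : ℕ) (hk : 1 ≤ k) (Q : ℕ → Prop) [DecidablePred Q]
    (hconv : ∀ a b c : ℕ, Q a → Q c → a ≤ b → b ≤ c → Q b)
    (hne : ∃ a : Fin m, Q a.val) :
    ((pathGraph m □ pathGraph k).induce
      ((univ.filter fun v : Fin m × Fin k => Q v.1.val : Finset (Fin m × Fin k)) : Set (Fin m × Fin k))).Connected := by
  set C : Set (Fin m × Fin k) :=
    ((univ.filter fun v : Fin m × Fin k => Q v.1.val : Finset (Fin m × Fin k)) : Set (Fin m × Fin k)) with hC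
  have hmemC : ∀ v : Fin m × Fin k, v ∈ C ↔ Q v.1.val := by
    intro v; simp [hC]
  set G := pathGraph m □ pathGraph k with hG
  -- vertical moves
  have vert : ∀ (a : Fin m) (ha : Q a.val) (n : ℕ) (b c : Fin k), b.val + n = c.val →
      (G.induce C).Reachable ⟨(a, b), (hmemC _).mpr ha⟩ ⟨(a, c), (hmemC _).mpr ha⟩ := by
    intro a ha n
    induction n with
    | zero =>
      intro b c h
      have : b = c := Fin.ext (by omega)
      subst this
      exact Reachable.refl _
    | succ n ih =>
      intro b c h
      have hb1 : b.val + 1 < k := by have := c.isLt; omega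
      set b' : Fin k := ⟨b.val + 1, hb1⟩ with hb'
      have hadj : (G.induce C).Adj ⟨(a, b), (hmemC _).mpr ha⟩ ⟨(a, b'), (hmemC _).mpr ha⟩ := by
        show G.Adj (a, b) (a, b')
        exact Or.inr ⟨pathGraph_adj.mpr (Or.inl rfl), rfl⟩
      exact hadj.reachable.trans (ih b' c (by simp [hb']; omega))
  -- horizontal moves
  have horiz : ∀ (b : Fin k) (n : ℕ) (a c : Fin m) (ha : Q a.val) (hc : Q c.val),
      a.val + n = c.val →
      (G.induce C).Reachable ⟨(a, b), (hmemC _).mpr ha⟩ ⟨(c, b), (hmemC _).mpr hc⟩ := by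
    intro b n
    induction n with
    | zero =>
      intro a c ha hc h
      have : a = c := Fin.ext (by omega)
      subst this
      exact Reachable.refl _
    | succ n ih =>
      intro a c ha hc h
      have ha1 : a.val + 1 < m := by have := c.isLt; omega
      set a' : Fin m := ⟨a.val + 1, ha1⟩ with ha'
      have hQa' : Q a'.val := hconv a.val a'.val c.val ha hc (by simp [ha']) (by simp [ha']; omega)
      have hadj : (G.induce C).Adj ⟨(a, b), (hmemC _).mpr ha⟩ ⟨(a', b), (hmemC _).mpr hQa'⟩ := by
        show G.Adj (a, b) (a', b)
        exact Or.inl ⟨pathGraph_adj.mpr (Or.inl rfl), rfl⟩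
      exact hadj.reachable.trans (ih a' c hQa' hc (by simp [ha']; omega))
  obtain ⟨a0, ha0⟩ := hne
  rw [connected_iff]
  constructor
  · rintro ⟨⟨a, b⟩, hab⟩ ⟨⟨c, d⟩, hcd⟩
    have hQa : Q a.val := (hmemC _).mp hab
    have hQc : Q c.val := (hmemC _).mp hcd
    have step1 : (G.induce C).Reachable ⟨(a, b), hab⟩ ⟨(a, d), (hmemC _).mpr hQa⟩ := by
      rcases le_or_gt b.val d.val with h | h
      · exact vert a hQa (d.val - b.val) b d (by omega)
      · exact (vert a hQa (b.val - d.val) d b (by omega)).symm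
    have step2 : (G.induce C).Reachable ⟨(a, d), (hmemC _).mpr hQa⟩ ⟨(c, d), hcd⟩ := by
      rcases le_or_gt a.val c.val with h | h
      · exact horiz d (c.val - a.val) a c hQa hQc (by omega)
      · exact (horiz d (a.val - c.val) c a hQc hQa (by omega)).symm
    exact step1.trans step2
  · exact ⟨⟨(a0, ⟨0, hk⟩), (hmemC _).mpr ha0⟩⟩

lemma connected_col (m k : ℕ) (hm : 1 ≤ m) (Q : ℕ → Prop) [DecidablePred Q]
    (hconv : ∀ a b c : ℕ, Q a → Q c → a ≤ b → b ≤ c → Q b)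
    (hne : ∃ b : Fin k, Q b.val) :
    ((pathGraph m □ pathGraph k).induce
      ((univ.filter fun v : Fin m × Fin k => Q v.2.val : Finset (Fin m × Fin k)) : Set (Fin m × Fin k))).Connected := by
  set C : Set (Fin m × Fin k) :=
    ((univ.filter fun v : Fin m × Fin k => Q v.2.val : Finset (Fin m × Fin k)) : Set (Fin m × Fin k)) with hC
  have hmemC : ∀ v : Fin m × Fin k, v ∈ C ↔ Q v.2.val := by
    intro v; simp [hC]
  set G := pathGraph m □ pathGraph k with hG
  have horiz : ∀ (b : Fin k) (hb : Q b.val) (n : ℕ) (a c : Fin m), a.val + n = c.val →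
      (G.induce C).Reachable ⟨(a, b), (hmemC _).mpr hb⟩ ⟨(c, b), (hmemC _).mpr hb⟩ := by
    intro b hb n
    induction n with
    | zero =>
      intro a c h
      have : a = c := Fin.ext (by omega)
      subst this
      exact Reachable.refl _
    | succ n ih =>
      intro a c h
      have ha1 : a.val + 1 < m := by have := c.isLt; omega
      set a' : Fin m := ⟨a.val + 1, ha1⟩ with ha'
      have hadj : (G.induce C).Adj ⟨(a, b), (hmemC _).mpr hb⟩ ⟨(a', b), (hmemC _).mpr hb⟩ := by
        show G.Adj (a, b) (a', b)
        exact Or.inl ⟨pathGraph_adj.mpr (Or.inl rfl), rfl⟩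
      exact hadj.reachable.trans (ih a' c (by simp [ha']; omega))
  have vert : ∀ (a : Fin m) (n : ℕ) (b d : Fin k) (hb : Q b.val) (hd : Q d.val),
      b.val + n = d.val →
      (G.induce C).Reachable ⟨(a, b), (hmemC _).mpr hb⟩ ⟨(a, d), (hmemC _).mpr hd⟩ := by
    intro a n
    induction n with
    | zero =>
      intro b d hb hd h
      have : b = d := Fin.ext (by omega)
      subst this
      exact Reachable.refl _
    | succ n ih =>
      intro b d hb hd h
      have hb1 : b.val + 1 < k := by have := d.isLt; omega
      set b' : Fin k := ⟨b.val + 1, hb1⟩ with hb'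
      have hQb' : Q b'.val := hconv b.val b'.val d.val hb hd (by simp [hb']) (by simp [hb']; omega)
      have hadj : (G.induce C).Adj ⟨(a, b), (hmemC _).mpr hb⟩ ⟨(a, b'), (hmemC _).mpr hQb'⟩ := by
        show G.Adj (a, b) (a, b')
        exact Or.inr ⟨pathGraph_adj.mpr (Or.inl rfl), rfl⟩
      exact hadj.reachable.trans (ih b' d hQb' hd (by simp [hb']; omega))
  obtain ⟨b0, hb0⟩ := hne
  rw [connected_iff]
  constructor
  · rintro ⟨⟨a, b⟩, hab⟩ ⟨⟨c, d⟩, hcd⟩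
    have hQb : Q b.val := (hmemC _).mp hab
    have hQd : Q d.val := (hmemC _).mp hcd
    have step1 : (G.induce C).Reachable ⟨(a, b), hab⟩ ⟨(c, b), (hmemC _).mpr hQb⟩ := by
      rcases le_or_gt a.val c.val with h | h
      · exact horiz b hQb (c.val - a.val) a c (by omega)
      · exact (horiz b hQb (a.val - c.val) c a (by omega)).symm
    have step2 : (G.induce C).Reachable ⟨(c, b), (hmemC _).mpr hQb⟩ ⟨(c, d), hcd⟩ := by
      rcases le_or_gt b.val d.val with h | h
      · exact vert c (d.val - b.val) b d hQb hQd (by omega)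
      · exact (vert c (b.val - d.val) d b hQd hQb (by omega)).symm
    exact step1.trans step2
  · exact ⟨⟨(⟨0, hm⟩, b0), (hmemC _).mpr hb0⟩⟩


section Final

variable {m k : ℕ}

lemma good_gridS (hm : 1 ≤ m) (hk : 1 ≤ k) :
    IsGoodSystem (pathGraph m □ pathGraph k) (gridS m k) := by
  constructor
  · intro C hC
    simp only [gridS, mem_union, mem_image] at hC
    rcases hC with ((⟨i, hi, rfl⟩ | ⟨i, hi, rfl⟩) | ⟨j, hj, rfl⟩) | ⟨j, hj, rfl⟩ <;>
      simp only [mem_Ico] at *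
    · exact connected_row m k hk (fun x => x < i) (fun a b c _ hc _ h2 => by omega)
        ⟨⟨0, by omega⟩, by simp; omega⟩
    · exact connected_row m k hk (fun x => i ≤ x) (fun a b c ha _ h1 _ => by omega)
        ⟨⟨m - 1, by omega⟩, by simp; omega⟩
    · exact connected_col m k hm (fun x => x < j) (fun a b c _ hc _ h2 => by omega)
        ⟨⟨0, by omega⟩, by simp; omega⟩
    · exact connected_col m k hm (fun x => j ≤ x) (fun a b c ha _ h1 _ => by omega)
        ⟨⟨k - 1, by omega⟩, by simp; omega⟩
  · intro s t hst
    have hne : s.1.val ≠ t.1.val ∨ s.2.val ≠ t.2.val := by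
      by_contra h
      push_neg at h
      exact hst (Prod.ext (Fin.ext h.1) (Fin.ext h.2))
    have hs1 := s.1.isLt
    have ht1 := t.1.isLt
    have hs2 := s.2.isLt
    have ht2 := t.2.isLt
    rcases hne with hne | hne
    · rcases Nat.lt_or_ge s.1.val t.1.val with h | h
      · refine ⟨(⟨s.1.val + 1, by omega⟩, s.2), Or.inl ⟨pathGraph_adj.mpr (Or.inl rfl), rfl⟩, ?_⟩
        rw [catDist_gridS hm hk, catDist_gridS hm hk]
        simp only
        omega
      · have h' : t.1.val < s.1.val := by omega
        refine ⟨(⟨s.1.val - 1, by omega⟩, s.2),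
          Or.inl ⟨pathGraph_adj.mpr (Or.inr (by simp; omega)), rfl⟩, ?_⟩
        rw [catDist_gridS hm hk, catDist_gridS hm hk]
        simp only
        omega
    · rcases Nat.lt_or_ge s.2.val t.2.val with h | h
      · refine ⟨(s.1, ⟨s.2.val + 1, by omega⟩), Or.inr ⟨pathGraph_adj.mpr (Or.inl rfl), rfl⟩, ?_⟩
        rw [catDist_gridS hm hk, catDist_gridS hm hk]
        simp only
        omega
      · have h' : t.2.val < s.2.val := by omega
        refine ⟨(s.1, ⟨s.2.val - 1, by omega⟩),
          Or.inr ⟨pathGraph_adj.mpr (Or.inr (by simp; omega)), rfl⟩, ?_⟩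
        rw [catDist_gridS hm hk, catDist_gridS hm hk]
        simp only
        omega

lemma memdim_gridS (hm : 1 ≤ m) (hk : 1 ≤ k) :
    memdim (gridS m k) = (m - 1) + (k - 1) := by
  have hne : Nonempty (Fin m × Fin k) := ⟨(⟨0, hm⟩, ⟨0, hk⟩)⟩
  rw [memdim]
  rw [show (fun v : Fin m × Fin k => ((gridS m k).filter fun C => v ∈ C).card) =
      fun _ => (m - 1) + (k - 1) from funext fun v => memdim_aux_gridS hm hk v]
  exact sup_const univ_nonempty _

end Final

noncomputable def graphDiam [Fintype V] (G : SimpleGraph V) : ℕ :=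
  univ.sup fun p : V × V => G.dist p.1 p.2

noncomputable def minMemdim (V : Type*) [DecidableEq V] [Fintype V] (G : SimpleGraph V) : ℕ :=
  sInf {m | ∃ S : Finset (Finset V), IsGoodSystem G S ∧ memdim S = m}

theorem stmt4 (m k : ℕ) (hm : 1 ≤ m) (hk : 1 ≤ k) :
    minMemdim (Fin m × Fin k) (pathGraph m □ pathGraph k) = (m - 1) + (k - 1) := by
  have hgood := good_gridS hm hk
  have hmemd := memdim_gridS hm hk
  unfold minMemdim
  apply le_antisymm
  · exact Nat.sInf_le ⟨gridS m k, hgood, hmemd⟩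
  · have hne : {n | ∃ S : Finset (Finset (Fin m × Fin k)),
        IsGoodSystem (pathGraph m □ pathGraph k) S ∧ memdim S = n}.Nonempty :=
      ⟨(m - 1) + (k - 1), gridS m k, hgood, hmemd⟩
    apply le_csInf hne
    rintro b ⟨S, hS, rfl⟩
    exact lower_bound m k hm hk hS
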